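/- For every n ≥ 1, every g : {−1,1}^n → ℝ, and every t > 0 one has ‖∇(P_t g)‖_∞ ≤ (e^{−t} / √(1 − e^{−2t})) · ‖g‖_∞. -/

import Mathlib

/-- Expectation with respect to the uniform probability measure on the Hamming cube
`{-1,1}^n`, encoded as `Fin n → Bool`. -/
noncomputable def cubeE {n : ℕ} (f : (Fin n → Bool) → ℝ) : ℝ :=
  (∑ x : Fin n → Bool, f x) / 2 ^ n

/-- The `j`-th discrete partial derivative on the Hamming cube. -/
noncomputable def pderiv {n : ℕ} (j : Fin n) (f : (Fin n → Bool) → ℝ)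
    (x : Fin n → Bool) : ℝ :=
  (f (Function.update x j true) - f (Function.update x j false)) / 2

/-- The gradient length `|∇f|(x) = (∑_j (∂_j f(x))²)^{1/2}`. -/
noncomputable def gradLen {n : ℕ} (f : (Fin n → Bool) → ℝ) (x : Fin n → Bool) : ℝ :=
  Real.sqrt (∑ j, (pderiv j f x) ^ 2)

/-- The sup norm `‖f‖_∞ = max_x |f(x)|` on the Hamming cube. -/
noncomputable def supNorm {n : ℕ} (f : (Fin n → Bool) → ℝ) : ℝ :=
  ⨆ x : Fin n → Bool, |f x|

/-- The coordinate value `x_i = ±1` of a Boolean-encoded cube point. -/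
def chi (b : Bool) : ℝ := if b then 1 else -1

/-- The Walsh character `x^S = ∏_{i∈S} x_i`. -/
noncomputable def walsh {n : ℕ} (S : Finset (Fin n)) (x : Fin n → Bool) : ℝ :=
  ∏ i ∈ S, chi (x i)

/-- The Fourier–Walsh coefficient `f̂(S) = 𝔼[f · x^S]`. -/
noncomputable def walshCoeff {n : ℕ} (f : (Fin n → Bool) → ℝ)
    (S : Finset (Fin n)) : ℝ :=
  cubeE (fun x => f x * walsh S x)

/-- The heat semigroup on the Hamming cube: `P_t f = ∑_S e^{−t|S|} f̂(S) x^S`. -/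
noncomputable def heat {n : ℕ} (t : ℝ) (f : (Fin n → Bool) → ℝ)
    (x : Fin n → Bool) : ℝ :=
  ∑ S : Finset (Fin n), Real.exp (-t * S.card) * walshCoeff f S * walsh S x

open Finset

lemma sum_pi_bool {n : ℕ} (h : Fin n → Bool → ℝ) :
    ∑ y : Fin n → Bool, ∏ i, h i (y i) = ∏ i, (h i true + h i false) := by
  have := Finset.prod_univ_sum (fun _ : Fin n => (Finset.univ : Finset Bool)) h
  rw [Fintype.piFinset_univ] at this
  rw [← this]
  exact Finset.prod_congr rfl fun i _ => Fintype.sum_bool _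

lemma kernel_expand {n : ℕ} (ρ : ℝ) (x y : Fin n → Bool) :
    ∏ i, (1 + ρ * chi (x i) * chi (y i))
      = ∑ S : Finset (Fin n), ρ ^ S.card * walsh S x * walsh S y := by
  have h : ∀ i ∈ (univ : Finset (Fin n)), (1 : ℝ) + ρ * chi (x i) * chi (y i)
      = ρ * chi (x i) * chi (y i) + 1 := fun i _ => add_comm _ _
  rw [Finset.prod_congr rfl h, Finset.prod_add, Finset.powerset_univ]
  refine Finset.sum_congr rfl fun S _ => ?_
  rw [Finset.prod_const_one, mul_one, walsh, walsh]
  rw [Finset.prod_mul_distrib, Finset.prod_mul_distrib, Finset.prod_const]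

lemma heat_kernel {n : ℕ} (t : ℝ) (g : (Fin n → Bool) → ℝ) (x : Fin n → Bool) :
    heat t g x
      = cubeE (fun y => g y * ∏ i, (1 + Real.exp (-t) * chi (x i) * chi (y i))) := by
  unfold heat walshCoeff cubeE
  have hexp : ∀ S : Finset (Fin n), Real.exp (-t * S.card) = Real.exp (-t) ^ S.card :=
    fun S => by rw [mul_comm, Real.exp_nat_mul]
  simp_rw [kernel_expand, Finset.mul_sum, Finset.sum_comm (γ := Fin n → Bool), hexp,
    Finset.sum_div]
  refine Finset.sum_congr rfl fun S _ => ?_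
  rw [Finset.mul_sum, Finset.sum_mul]
  exact Finset.sum_congr rfl fun y _ => by ring

lemma prod_update_split {n : ℕ} (ρ : ℝ) (x y : Fin n → Bool) (j : Fin n) (b : Bool) :
    ∏ i, (1 + ρ * chi (Function.update x j b i) * chi (y i))
      = (1 + ρ * chi b * chi (y j)) *
          ∏ i ∈ univ.erase j, (1 + ρ * chi (x i) * chi (y i)) := by
  rw [← Finset.mul_prod_erase Finset.univ _ (Finset.mem_univ j), Function.update_self]
  congr 1
  refine Finset.prod_congr rfl fun i hi => ?_
  rw [Function.update_of_ne (Finset.ne_of_mem_erase hi)]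

lemma pderiv_heat {n : ℕ} (t : ℝ) (g : (Fin n → Bool) → ℝ) (x : Fin n → Bool) (j : Fin n) :
    pderiv j (heat t g) x
      = cubeE (fun y => g y * (Real.exp (-t) * chi (y j) *
          ∏ i ∈ univ.erase j, (1 + Real.exp (-t) * chi (x i) * chi (y i)))) := by
  set ρ := Real.exp (-t) with hρ
  rw [pderiv, heat_kernel, heat_kernel]
  unfold cubeE
  rw [div_sub_div_same, ← Finset.sum_sub_distrib]
  have key : ∀ y : Fin n → Bool,
      g y * ∏ i, (1 + ρ * chi (Function.update x j true i) * chi (y i))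
        - g y * ∏ i, (1 + ρ * chi (Function.update x j false i) * chi (y i))
        = 2 * (g y * (ρ * chi (y j) *
            ∏ i ∈ univ.erase j, (1 + ρ * chi (x i) * chi (y i)))) := fun y => by
    rw [prod_update_split, prod_update_split]; cases hyj : y j <;> simp [chi, hyj] <;> ring
  simp_rw [← hρ, key, ← Finset.mul_sum]
  ring

lemma chi_mul_self (b : Bool) : chi b * chi b = 1 := by cases b <;> simp [chi]

lemma fac_pos {ρ : ℝ} (hρ0 : 0 < ρ) (hρ1 : ρ < 1) (a b : Bool) :
    0 < 1 + ρ * chi a * chi b := by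
  cases a <;> cases b <;> simp [chi] <;> linarith

lemma sum_K {n : ℕ} (ρ : ℝ) (x : Fin n → Bool) :
    ∑ y : Fin n → Bool, ∏ i, (1 + ρ * chi (x i) * chi (y i)) = 2 ^ n := by
  rw [sum_pi_bool fun i b => 1 + ρ * chi (x i) * chi b]
  have h : ∀ i ∈ (univ : Finset (Fin n)),
      ((1 : ℝ) + ρ * chi (x i) * chi true) + (1 + ρ * chi (x i) * chi false) = 2 := by
    intro i _; cases x i <;> simp [chi] <;> ring
  rw [Finset.prod_congr rfl h, Finset.prod_const, card_univ, Fintype.card_fin]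

lemma sum_K_diag {n : ℕ} (hn : 1 ≤ n) {ρ : ℝ} (hρ0 : 0 < ρ) (hρ1 : ρ < 1)
    (x : Fin n → Bool) (j : Fin n) :
    ∑ y : Fin n → Bool,
        (∏ i ∈ univ.erase j, (1 + ρ * chi (x i) * chi (y i))) / (1 + ρ * chi (x j) * chi (y j))
      = 2 ^ n / (1 - ρ ^ 2) := by
  have hrepr : ∀ y : Fin n → Bool,
      (∏ i ∈ univ.erase j, (1 + ρ * chi (x i) * chi (y i))) / (1 + ρ * chi (x j) * chi (y j))
        = ∏ i, (if i = j then (1 + ρ * chi (x i) * chi (y i))⁻¹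
            else (1 + ρ * chi (x i) * chi (y i))) := by
    intro y
    rw [← Finset.mul_prod_erase Finset.univ _ (Finset.mem_univ j), if_pos rfl]
    rw [div_eq_mul_inv, mul_comm]
    congr 1
    exact Finset.prod_congr rfl fun i hi => by rw [if_neg (Finset.ne_of_mem_erase hi)]
  simp_rw [hrepr]
  rw [sum_pi_bool fun i b => (if i = j then (1 + ρ * chi (x i) * chi b)⁻¹
        else (1 + ρ * chi (x i) * chi b))]
  have hval : ∀ i : Fin n,
      ((if i = j then (1 + ρ * chi (x i) * chi true)⁻¹ else (1 + ρ * chi (x i) * chi true))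
        + (if i = j then (1 + ρ * chi (x i) * chi false)⁻¹ else (1 + ρ * chi (x i) * chi false)))
      = if i = j then 2 / (1 - ρ ^ 2) else 2 := by
    intro i
    by_cases hij : i = j
    · have key2 : ∀ b : Bool,
          (1 + ρ * chi b * chi true)⁻¹ + (1 + ρ * chi b * chi false)⁻¹ = 2 / (1 - ρ ^ 2) := by
        have h1 : (0:ℝ) < 1 - ρ := by linarith
        have h2 : (0:ℝ) < 1 + ρ := by linarith
        have key1 : (1 + ρ)⁻¹ + (1 - ρ)⁻¹ = 2 / (1 - ρ ^ 2) := by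
          rw [inv_add_inv h2.ne' h1.ne', show (1 + ρ) + (1 - ρ) = (2:ℝ) by ring,
            show (1 + ρ) * (1 - ρ) = 1 - ρ ^ 2 by ring]
        intro b; cases b
        · rw [show (1 + ρ * chi false * chi true) = 1 - ρ by simp [chi, sub_eq_add_neg],
            show (1 + ρ * chi false * chi false) = 1 + ρ by simp [chi], add_comm]
          exact key1
        · rw [show (1 + ρ * chi true * chi true) = 1 + ρ by simp [chi],
            show (1 + ρ * chi true * chi false) = 1 - ρ by simp [chi, sub_eq_add_neg]]
          exact key1
      simp only [hij, eq_self_iff_true, if_true]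
      exact key2 (x j)
    · simp only [if_neg hij]
      cases x i <;> simp [chi] <;> ring
  rw [Finset.prod_congr rfl fun i _ => hval i]
  rw [← Finset.mul_prod_erase Finset.univ _ (Finset.mem_univ j), if_pos rfl]
  rw [Finset.prod_congr rfl fun i hi => if_neg (Finset.ne_of_mem_erase hi),
    Finset.prod_const, Finset.card_erase_of_mem (Finset.mem_univ j), card_univ,
    Fintype.card_fin]
  rw [div_mul_eq_mul_div]
  congr 1
  rw [← pow_succ']
  congr 1
  omega

lemma sum_K_offdiag {n : ℕ} (ρ : ℝ) (x : Fin n → Bool) {j k : Fin n} (hjk : j ≠ k) :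
    ∑ y : Fin n → Bool, chi (y j) * chi (y k) *
        ∏ i ∈ (univ.erase j).erase k, (1 + ρ * chi (x i) * chi (y i)) = 0 := by
  have hkmem : k ∈ (univ : Finset (Fin n)).erase j :=
    Finset.mem_erase.mpr ⟨hjk.symm, Finset.mem_univ k⟩
  have hrepr : ∀ y : Fin n → Bool,
      chi (y j) * chi (y k) *
          ∏ i ∈ (univ.erase j).erase k, (1 + ρ * chi (x i) * chi (y i))
        = ∏ i, (if i = j then chi (y i) else if i = k then chi (y i)
            else (1 + ρ * chi (x i) * chi (y i))) := by
    intro y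
    rw [← Finset.mul_prod_erase Finset.univ _ (Finset.mem_univ j), if_pos rfl]
    rw [← Finset.mul_prod_erase _ _ (Finset.mem_erase.mpr ⟨hjk.symm, Finset.mem_univ k⟩)]
    rw [if_neg (Ne.symm hjk), if_pos rfl, ← mul_assoc]
    congr 1
    refine Finset.prod_congr rfl fun i hi => ?_
    have hik : i ≠ k := Finset.ne_of_mem_erase hi
    have hij : i ≠ j := Finset.ne_of_mem_erase (Finset.mem_of_mem_erase hi)
    rw [if_neg hij, if_neg hik]
  simp_rw [hrepr]
  rw [sum_pi_bool fun i b => (if i = j then chi b else if i = k then chi b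
        else (1 + ρ * chi (x i) * chi b))]
  refine Finset.prod_eq_zero (Finset.mem_univ j) ?_
  rw [if_pos rfl, if_pos rfl]
  simp [chi]

set_option maxHeartbeats 1000000 in
lemma point_bound {n : ℕ} (hn : 1 ≤ n) (g : (Fin n → Bool) → ℝ) (t : ℝ) (ht : 0 < t)
    (M : ℝ) (hM : ∀ y, |g y| ≤ M) (x : Fin n → Bool) :
    gradLen (heat t g) x ≤ Real.exp (-t) / Real.sqrt (1 - Real.exp (-2 * t)) * M := by
  have hM0 : 0 ≤ M := le_trans (abs_nonneg _) (hM (fun _ => true))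
  set ρ := Real.exp (-t) with hρdef
  have hρ0 : 0 < ρ := Real.exp_pos _
  have hρ1 : ρ < 1 := Real.exp_lt_one_iff.mpr (by linarith)
  have hρ2 : Real.exp (-2 * t) = ρ ^ 2 := by
    rw [hρdef, ← Real.exp_nat_mul, show ((2:ℕ):ℝ) * (-t) = -2 * t by push_cast; ring]
  have h1ρ : (0:ℝ) < 1 - ρ ^ 2 := by nlinarith
  set s := Real.sqrt (1 - Real.exp (-2 * t)) with hsdef
  have hs2 : s ^ 2 = 1 - ρ ^ 2 := by rw [hsdef, hρ2, Real.sq_sqrt h1ρ.le]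
  have hs0 : 0 < s := by rw [hsdef, hρ2]; exact Real.sqrt_pos.mpr h1ρ
  -- abbreviations
  set fac : Fin n → (Fin n → Bool) → ℝ := fun i y => 1 + ρ * chi (x i) * chi (y i) with hfacdef
  have hfacpos : ∀ i y, 0 < fac i y := fun i y => fac_pos hρ0 hρ1 _ _
  set K : (Fin n → Bool) → ℝ := fun y => ∏ i, fac i y with hKdef
  have hK0 : ∀ y, 0 ≤ K y := fun y => Finset.prod_nonneg fun i _ => (hfacpos i y).le
  set D : Fin n → ℝ := fun j => pderiv j (heat t g) x with hDdef
  set Q : Fin n → (Fin n → Bool) → ℝ := fun j y => chi (y j) / fac j y with hQdef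
  set H : (Fin n → Bool) → ℝ := fun y => ∑ j, D j * Q j y with hHdef
  have hKsplit : ∀ (j : Fin n) y, K y = fac j y * ∏ i ∈ univ.erase j, fac i y :=
    fun j y => (Finset.mul_prod_erase _ _ (Finset.mem_univ j)).symm
  have hQK : ∀ j y, Q j y * K y = chi (y j) * ∏ i ∈ univ.erase j, fac i y := by
    intro j y
    rw [hKsplit j y, hQdef]
    field_simp [(hfacpos j y).ne']
  have hsumK : ∑ y, K y = 2 ^ n := sum_K ρ x
  have hDQ : ∀ j, D j = ρ / 2 ^ n * ∑ y, g y * (Q j y * K y) := by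
    intro j
    simp_rw [hQK]
    rw [hDdef]
    show pderiv j (heat t g) x = _
    rw [pderiv_heat]
    unfold cubeE
    rw [Finset.mul_sum, Finset.sum_div]
    exact Finset.sum_congr rfl fun y _ => by rw [← hρdef]; ring
  -- quadratic form
  have hKQQ : ∀ j k : Fin n, ∑ y, K y * (Q j y * Q k y)
      = if j = k then 2 ^ n / (1 - ρ ^ 2) else 0 := by
    intro j k
    by_cases hjk : j = k
    · subst hjk
      rw [if_pos rfl]
      have hterm : ∀ y, K y * (Q j y * Q j y)
          = (∏ i ∈ univ.erase j, fac i y) / fac j y := by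
        intro y
        rw [hKsplit j y, hQdef]
        have hne := (hfacpos j y).ne'
        field_simp
        rw [sq, show chi (y j) * chi (y j) = 1 from chi_mul_self _]
        ring
      simp_rw [hterm]
      exact sum_K_diag hn hρ0 hρ1 x j
    · rw [if_neg hjk]
      have hkj : k ∈ (univ : Finset (Fin n)).erase j :=
        Finset.mem_erase.mpr ⟨Ne.symm hjk, Finset.mem_univ k⟩
      have hterm : ∀ y, K y * (Q j y * Q k y)
          = chi (y j) * chi (y k) * ∏ i ∈ (univ.erase j).erase k, fac i y := by
        intro y
        rw [hKsplit j y, ← Finset.mul_prod_erase _ _ hkj, hQdef]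
        have h1 := (hfacpos j y).ne'
        have h2 := (hfacpos k y).ne'
        field_simp
      simp_rw [hterm]
      exact sum_K_offdiag ρ x hjk
  have hKH2 : ∑ y, K y * H y ^ 2 = 2 ^ n / (1 - ρ ^ 2) * ∑ j, D j ^ 2 := by
    have hexp : ∀ y, K y * H y ^ 2
        = ∑ j, ∑ k, D j * D k * (K y * (Q j y * Q k y)) := by
      intro y
      rw [hHdef]
      show K y * (∑ j, D j * Q j y) ^ 2 = _
      rw [sq, Finset.sum_mul_sum, Finset.mul_sum]
      refine Finset.sum_congr rfl fun j _ => ?_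
      rw [Finset.mul_sum]
      exact Finset.sum_congr rfl fun k _ => by ring
    simp_rw [hexp]
    rw [Finset.sum_comm]
    have : ∀ j, ∑ y, ∑ k, D j * D k * (K y * (Q j y * Q k y))
        = 2 ^ n / (1 - ρ ^ 2) * D j ^ 2 := by
      intro j
      rw [Finset.sum_comm]
      have hper : ∀ k, ∑ y, D j * D k * (K y * (Q j y * Q k y))
          = D j * D k * if j = k then 2 ^ n / (1 - ρ ^ 2) else 0 := by
        intro k
        rw [← Finset.mul_sum, hKQQ]
      simp_rw [hper]
      rw [Finset.sum_eq_single j]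
      · rw [if_pos rfl]; ring
      · intro k _ hkj; rw [if_neg (Ne.symm hkj), mul_zero]
      · intro h; exact absurd (Finset.mem_univ j) h
    rw [Finset.sum_congr rfl fun j _ => this j, ← Finset.mul_sum]
  have hSD : ∑ j, D j ^ 2 = ρ / 2 ^ n * ∑ y, g y * (H y * K y) := by
    have hy : ∀ y, g y * (H y * K y) = ∑ j, D j * (g y * (Q j y * K y)) := by
      intro y
      rw [hHdef]
      show g y * ((∑ j, D j * Q j y) * K y) = _
      rw [Finset.sum_mul, Finset.mul_sum]
      exact Finset.sum_congr rfl fun j _ => by ring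
    simp_rw [hy, Finset.mul_sum]
    rw [Finset.sum_comm]
    refine Finset.sum_congr rfl fun j _ => Eq.symm ?_
    calc (∑ y, ρ / 2 ^ n * (D j * (g y * (Q j y * K y))))
        = D j * (ρ / 2 ^ n * ∑ y, g y * (Q j y * K y)) := by
          rw [Finset.mul_sum, Finset.mul_sum]
          exact Finset.sum_congr rfl fun y _ => by ring
      _ = D j * D j := by rw [← hDQ j]
      _ = D j ^ 2 := (pow_two (D j)).symm
  set SD := ∑ j, D j ^ 2 with hSDdef
  have hSD0 : 0 ≤ SD := Finset.sum_nonneg fun j _ => sq_nonneg _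
  set G := Real.sqrt SD with hGdef
  have hG0 : 0 ≤ G := Real.sqrt_nonneg _
  have hG2 : G ^ 2 = SD := Real.sq_sqrt hSD0
  -- Cauchy–Schwarz
  have hCS : (∑ y, K y * |H y|) ^ 2 ≤ 2 ^ n * (2 ^ n / (1 - ρ ^ 2) * SD) := by
    have h1 : ∀ y, K y * |H y| = Real.sqrt (K y) * (Real.sqrt (K y) * |H y|) := by
      intro y; rw [← mul_assoc, Real.mul_self_sqrt (hK0 y)]
    calc (∑ y, K y * |H y|) ^ 2
        = (∑ y, Real.sqrt (K y) * (Real.sqrt (K y) * |H y|)) ^ 2 := by simp_rw [h1]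
      _ ≤ (∑ y, Real.sqrt (K y) ^ 2) * ∑ y, (Real.sqrt (K y) * |H y|) ^ 2 :=
          Finset.sum_mul_sq_le_sq_mul_sq _ _ _
      _ = (∑ y, K y) * ∑ y, K y * H y ^ 2 := by
          congr 1
          · exact Finset.sum_congr rfl fun y _ => Real.sq_sqrt (hK0 y)
          · refine Finset.sum_congr rfl fun y _ => ?_
            rw [mul_pow, Real.sq_sqrt (hK0 y), sq_abs]
      _ = 2 ^ n * (2 ^ n / (1 - ρ ^ 2) * SD) := by rw [hsumK, hKH2]
  have hHK_le : ∑ y, K y * |H y| ≤ 2 ^ n * G / s := by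
    have hl0 : 0 ≤ ∑ y, K y * |H y| :=
      Finset.sum_nonneg fun y _ => mul_nonneg (hK0 y) (abs_nonneg _)
    have hr0 : 0 ≤ 2 ^ n * G / s := by positivity
    have hsq : (2 ^ n * G / s) ^ 2 = 2 ^ n * (2 ^ n / (1 - ρ ^ 2) * SD) := by
      rw [div_pow, mul_pow, hG2, hs2]
      ring
    nlinarith [hCS]
  have hmain : SD ≤ ρ * M / s * G := by
    calc SD = ρ / 2 ^ n * ∑ y, g y * (H y * K y) := hSD
      _ ≤ ρ / 2 ^ n * ∑ y, M * (K y * |H y|) := by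
          refine mul_le_mul_of_nonneg_left (Finset.sum_le_sum fun y _ => ?_) (by positivity)
          calc g y * (H y * K y) ≤ |g y * (H y * K y)| := le_abs_self _
            _ = |g y| * (K y * |H y|) := by
                rw [abs_mul, abs_mul, abs_of_nonneg (hK0 y)]; ring
            _ ≤ M * (K y * |H y|) :=
                mul_le_mul_of_nonneg_right (hM y)
                  (mul_nonneg (hK0 y) (abs_nonneg _))
      _ = ρ / 2 ^ n * (M * ∑ y, K y * |H y|) := by simp_rw [Finset.mul_sum]
      _ ≤ ρ / 2 ^ n * (M * (2 ^ n * G / s)) := by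
          refine mul_le_mul_of_nonneg_left
            (mul_le_mul_of_nonneg_left hHK_le hM0) (by positivity)
      _ = ρ * M / s * G := by
          have h2n : ((2:ℝ) ^ n) ≠ 0 := by positivity
          field_simp
  have hfinal : G ≤ ρ * M / s := by
    rcases eq_or_lt_of_le hG0 with h0 | h0
    · rw [← h0]; positivity
    · have h := hmain
      rw [← hG2] at h
      nlinarith
  have hgl : gradLen (heat t g) x = G := rfl
  rw [hgl]
  calc G ≤ ρ * M / s := hfinal
    _ = ρ / s * M := by ring

/-- For every `n ≥ 1`, every `g : {−1,1}^n → ℝ` and every `t > 0`,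
`‖∇(P_t g)‖_∞ ≤ (e^{−t}/√(1 − e^{−2t})) ‖g‖_∞`. -/
theorem grad_heat_sup_bound (n : ℕ) (hn : 1 ≤ n) (g : (Fin n → Bool) → ℝ)
    (t : ℝ) (ht : 0 < t) :
    supNorm (gradLen (heat t g))
      ≤ Real.exp (-t) / Real.sqrt (1 - Real.exp (-2 * t)) * supNorm g := by
  have hM : ∀ y, |g y| ≤ supNorm g := fun y =>
    le_ciSup (Set.Finite.bddAbove (Set.finite_range fun z => |g z|)) y
  refine ciSup_le fun x => ?_
  have h0 : (0:ℝ) ≤ gradLen (heat t g) x := Real.sqrt_nonneg _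
  rw [abs_of_nonneg h0]
  exact point_bound hn g t ht (supNorm g) hM x
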